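/- arXiv:0801.4220 — 2 statements merged into one kernel-verified Lean document; each statement's English description precedes it below -/
import Mathlib

section
/- For all real T > 0, c ≥ 0 with c < T, and all real ξ ≠ 0, the Fourier transform of the function x ↦ max(log(T/(|x|+c)), 0) satisfies ∫_{-∞}^{∞} e^{-2πiξx} · max(log(T/(|x|+c)),0) dx = (1/(π|ξ|)) ∫_0^{2π(T-c)|ξ|} sin(x)/(x + 2π|ξ|c) dx. -/
open MeasureTheory Real intervalIntegral Set Filter Topology


lemma logInt01 : IntervalIntegrable Real.log volume 0 1 := by
  rw [intervalIntegrable_iff, uIoc_of_le zero_le_one]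
  have hg : IntegrableOn (fun x : ℝ => 2 * x ^ (-(1/2) : ℝ)) (Ioc (0:ℝ) 1) volume := by
    have := (intervalIntegral.intervalIntegrable_rpow' (a := 0) (b := 1)
      (r := -(1/2)) (by norm_num)).const_mul 2
    rwa [intervalIntegrable_iff, uIoc_of_le zero_le_one] at this
  refine hg.integrable.mono' Real.measurable_log.aestronglyMeasurable ?_
  rw [ae_restrict_iff' measurableSet_Ioc]
  filter_upwards with x hx
  have h1 : 0 < x := hx.1
  have h2 : x ≤ 1 := hx.2
  have hb := (abs_log_mul_self_rpow_lt x (1/2) h1 h2 (by norm_num)).le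
  have hp : (0:ℝ) < x ^ ((1/2) : ℝ) := Real.rpow_pos_of_pos h1 _
  rw [Real.norm_eq_abs]
  have : |Real.log x| ≤ 2 / x ^ ((1/2):ℝ) := by
    rw [le_div_iff₀ hp]
    calc |Real.log x| * x ^ ((1/2):ℝ) = |Real.log x * x ^ ((1/2):ℝ)| := by
          rw [abs_mul, abs_of_pos hp]
      _ ≤ 2 := by linarith [hb]; 
  refine this.trans (le_of_eq ?_)
  rw [Real.rpow_neg h1.le, div_eq_mul_inv]

lemma logInt (b : ℝ) (hb : 0 ≤ b) : IntervalIntegrable Real.log volume 0 b := by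
  rcases le_total b 1 with h | h
  · exact logInt01.mono_set (by rw [Set.uIcc_of_le hb, Set.uIcc_of_le zero_le_one]; exact Set.Icc_subset_Icc le_rfl h)
  · exact logInt01.trans (intervalIntegrable_log (by
      rw [Set.uIcc_of_le h]; rintro ⟨h1, -⟩; linarith))

lemma logAddInt (c b : ℝ) (hc : 0 ≤ c) (hb : 0 ≤ b) :
    IntervalIntegrable (fun x => Real.log (x + c)) volume 0 b := by
  have h1 : IntervalIntegrable Real.log volume 0 (b + c) := logInt _ (by linarith)
  have h2 : IntervalIntegrable Real.log volume c (b + c) :=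
    h1.mono_set (by
      rw [Set.uIcc_of_le (by linarith : c ≤ b + c), Set.uIcc_of_le (by linarith : (0:ℝ) ≤ b + c)]
      exact Set.Icc_subset_Icc hc le_rfl)
  have := h2.comp_add_right c
  simpa using this


lemma auxTendsto (c : ℝ) (hc : 0 ≤ c) :
    Tendsto (fun x => |Real.log (x + c)| * x) (nhdsWithin 0 (Set.Ioi 0)) (nhds 0) := by
  have hev : ∀ᶠ x in nhdsWithin (0:ℝ) (Set.Ioi 0),
      |Real.log (x + c)| * x ≤ |Real.log x| * x + |Real.log (1 + c)| * x := by
    filter_upwards [Ioo_mem_nhdsGT_of_mem (by norm_num : (0:ℝ) ∈ Set.Ico (0:ℝ) 1)] with x hx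
    have hx0 : 0 < x := hx.1
    have hx1 : x < 1 := hx.2
    have hxc : 0 < x + c := by linarith
    have key : |Real.log (x + c)| ≤ |Real.log x| + |Real.log (1 + c)| := by
      rcases le_or_gt 0 (Real.log (x + c)) with hl | hl
      · rw [abs_of_nonneg hl]
        have : Real.log (x + c) ≤ Real.log (1 + c) :=
          Real.log_le_log hxc (by linarith)
        have h2 : Real.log (1 + c) ≤ |Real.log (1 + c)| := le_abs_self _
        have := abs_nonneg (Real.log x)
        linarith
      · rw [abs_of_neg hl]
        have h1 : Real.log x ≤ Real.log (x + c) := Real.log_le_log hx0 (by linarith)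
        have h2 : -Real.log x ≤ |Real.log x| := neg_le_abs _
        have := abs_nonneg (Real.log (1 + c))
        linarith
    nlinarith [abs_nonneg (Real.log x), abs_nonneg (Real.log (1+c))]
  have hpos : ∀ᶠ x in nhdsWithin (0:ℝ) (Set.Ioi 0), 0 ≤ |Real.log (x + c)| * x := by
    filter_upwards [self_mem_nhdsWithin] with x (hx : 0 < x)
    positivity
  refine squeeze_zero' hpos hev ?_
  have t1 : Tendsto (fun x : ℝ => |Real.log x| * x) (nhdsWithin 0 (Set.Ioi 0)) (nhds 0) := by
    have hcont : Tendsto (fun x : ℝ => |x * Real.log x|) (nhds 0) (nhds 0) := by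
      have := (continuous_abs.comp Real.continuous_mul_log).tendsto 0
      simpa [Function.comp_def, abs_mul] using this
    refine (hcont.mono_left nhdsWithin_le_nhds).congr' ?_
    filter_upwards [self_mem_nhdsWithin] with x (hx : 0 < x)
    rw [abs_mul, abs_of_pos hx, mul_comm]
  have t2 : Tendsto (fun x : ℝ => |Real.log (1 + c)| * x) (nhdsWithin 0 (Set.Ioi 0)) (nhds 0) := by
    have h : Continuous (fun x : ℝ => |Real.log (1 + c)| * x) := continuous_const.mul continuous_id
    have := (h.tendsto 0).mono_left (nhdsWithin_le_nhds (s := Set.Ioi (0:ℝ)))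
    simpa using this
  simpa using t1.add t2

set_option maxHeartbeats 1000000 in
lemma realSide (T c ξ : ℝ) (hT : 0 < T) (hc : 0 ≤ c) (hcT : c < T) (hξ : ξ ≠ 0) :
    ∫ x in (0:ℝ)..(T - c), 2 * Real.cos ((2*Real.pi*ξ)*x) * (max (Real.log (T / (|x| + c))) 0) =
      (1 / (Real.pi * |ξ|)) *
        ∫ x in (0 : ℝ)..(2 * Real.pi * (T - c) * |ξ|),
          Real.sin x / (x + 2 * Real.pi * |ξ| * c) := by
  have hπ : (0:ℝ) < π := Real.pi_pos
  have hA : 0 < T - c := by linarith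
  have hξ' : 0 < |ξ| := abs_pos.mpr hξ
  set A := T - c with hAdef
  set θ := 2 * π * ξ with hθdef
  set k := 2 * π * |ξ| with hkdef
  have hθ0 : θ ≠ 0 := by
    simp only [hθdef]; positivity
  have hk0 : 0 < k := by rw [hkdef]; positivity
  -- the log-integrand is integrable
  have gInt : IntervalIntegrable (fun x => Real.log T - Real.log (x + c)) volume 0 A :=
    (_root_.intervalIntegrable_const).sub (logAddInt c A hc hA.le)
  -- step a: replace max-form by plain form (a.e. on Ioc)
  have stepa : ∫ x in (0:ℝ)..A, 2 * Real.cos (θ*x) * (max (Real.log (T / (|x| + c))) 0)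
      = ∫ x in (0:ℝ)..A, 2 * (Real.cos (θ*x) * (Real.log T - Real.log (x + c))) := by
    apply intervalIntegral.integral_congr_ae
    filter_upwards with x hx
    rw [Set.uIoc_of_le hA.le] at hx
    have hx0 : 0 < x := hx.1
    have hxc : 0 < x + c := by linarith
    have hxT : x + c ≤ T := by have := hx.2; simp only [hAdef] at this ⊢; linarith
    have h1 : Real.log (T / (|x| + c)) = Real.log T - Real.log (x + c) := by
      rw [abs_of_pos hx0, Real.log_div hT.ne' hxc.ne']
    have h2 : 0 ≤ Real.log T - Real.log (x + c) :=
      sub_nonneg.mpr (Real.log_le_log hxc hxT)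
    rw [h1, max_eq_left h2]; ring
  -- FTC / integration by parts
  have p1 : IntervalIntegrable (fun x => Real.cos (θ*x) * (Real.log T - Real.log (x + c)))
      volume 0 A :=
    gInt.continuousOn_mul (Continuous.continuousOn
      (Real.continuous_cos.comp (continuous_const.mul continuous_id)))
  have p2 : IntervalIntegrable (fun x => Real.sin (θ*x) / (θ*(x + c))) volume 0 A := by
    rw [intervalIntegrable_iff, uIoc_of_le hA.le]
    have hmeas : AEStronglyMeasurable (fun x => Real.sin (θ*x) / (θ*(x + c)))
        (volume.restrict (Ioc 0 A)) :=
      ((Real.measurable_sin.comp (measurable_id.const_mul θ)).div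
        ((measurable_id.add_const c).const_mul θ)).aestronglyMeasurable
    refine Integrable.mono' (g := fun _ => (1:ℝ)) ?_ hmeas ?_
    · exact integrableOn_const measure_Ioc_lt_top.ne
    · rw [ae_restrict_iff' measurableSet_Ioc]
      filter_upwards with x hx
      have hx0 : 0 < x := hx.1
      have hxc : 0 < x + c := by linarith
      have hden : 0 < |θ*(x+c)| := abs_pos.mpr (mul_ne_zero hθ0 hxc.ne')
      have h1 : ‖Real.sin (θ*x) / (θ*(x + c))‖ = |Real.sin (θ*x)| / |θ*(x+c)| := by
        rw [Real.norm_eq_abs, abs_div]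
      rw [h1, div_le_one hden]
      calc |Real.sin (θ*x)| ≤ |θ*x| := Real.abs_sin_le_abs
        _ ≤ |θ*(x+c)| := by
            rw [abs_mul θ x, abs_mul θ (x+c)]
            have hxx : |x| ≤ |x+c| := by rw [abs_of_pos hx0, abs_of_pos hxc]; linarith
            exact mul_le_mul_of_nonneg_left hxx (abs_nonneg θ)
  have hFTC : ∫ x in (0:ℝ)..A,
      (Real.cos (θ*x) * (Real.log T - Real.log (x + c)) - Real.sin (θ*x) / (θ*(x + c))) = 0 := by
    have hderiv : ∀ x ∈ Set.Ioo (0:ℝ) A,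
        HasDerivAt (fun y => (Real.log T - Real.log (y + c)) * (Real.sin (θ*y)/θ))
          (Real.cos (θ*x) * (Real.log T - Real.log (x + c)) - Real.sin (θ*x) / (θ*(x + c))) x := by
      intro x hx
      have hx0 : 0 < x := hx.1
      have hxc : 0 < x + c := by linarith
      have h1 : HasDerivAt (fun y : ℝ => Real.log (y + c)) (x + c)⁻¹ x := by
        have := (Real.hasDerivAt_log hxc.ne').comp x ((hasDerivAt_id x).add_const c)
        simpa [Function.comp_def] using this
      have h2 : HasDerivAt (fun y : ℝ => Real.sin (θ*y)/θ) (Real.cos (θ*x)) x := by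
        have := ((Real.hasDerivAt_sin (θ*x)).comp x ((hasDerivAt_id x).const_mul θ)).div_const θ
        convert this using 1
        · rfl
        · rfl
        · rfl
        field_simp
      have := ((hasDerivAt_const x (Real.log T)).sub h1).mul h2
      convert this using 1
      · rfl
      · rfl
      · rfl
      field_simp
      simp only [Pi.sub_apply, add_comm c x]
      ring
    have ha : Tendsto (fun y => (Real.log T - Real.log (y + c)) * (Real.sin (θ*y)/θ))
        (nhdsWithin 0 (Set.Ioi 0)) (nhds 0) := by
      have t1 : Tendsto (fun y : ℝ => Real.log T * (Real.sin (θ*y)/θ))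
          (nhdsWithin 0 (Set.Ioi 0)) (nhds 0) := by
        have hcont : Continuous (fun y : ℝ => Real.log T * (Real.sin (θ*y)/θ)) :=
          continuous_const.mul ((Real.continuous_sin.comp
            (continuous_const.mul continuous_id)).div_const θ)
        have h2 := (hcont.tendsto 0).mono_left (nhdsWithin_le_nhds (s := Set.Ioi (0:ℝ)))
        simpa using h2
      have t2 : Tendsto (fun y : ℝ => Real.log (y + c) * (Real.sin (θ*y)/θ))
          (nhdsWithin 0 (Set.Ioi 0)) (nhds 0) := by
        refine squeeze_zero_norm' ?_ (auxTendsto c hc)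
        filter_upwards [self_mem_nhdsWithin] with y (hy : 0 < y)
        rw [Real.norm_eq_abs, abs_mul]
        apply mul_le_mul_of_nonneg_left _ (abs_nonneg _)
        rw [abs_div, div_le_iff₀ (abs_pos.mpr hθ0)]
        calc |Real.sin (θ*y)| ≤ |θ*y| := Real.abs_sin_le_abs
          _ = y * |θ| := by rw [abs_mul, abs_of_pos hy]; ring
      have t3 := t1.sub t2
      rw [sub_zero] at t3
      exact Tendsto.congr (fun y => by ring) t3
    have hb : Tendsto (fun y => (Real.log T - Real.log (y + c)) * (Real.sin (θ*y)/θ))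
        (nhdsWithin A (Set.Iio A)) (nhds 0) := by
      have hAc : (0:ℝ) < A + c := by linarith
      have hcont : ContinuousAt (fun y => (Real.log T - Real.log (y + c)) * (Real.sin (θ*y)/θ)) A := by
        apply ContinuousAt.mul
        · apply ContinuousAt.sub continuousAt_const
          have hadd : ContinuousAt (fun y : ℝ => y + c) A :=
            (continuous_id.add continuous_const).continuousAt
          exact ContinuousAt.comp (x := A) (f := fun y : ℝ => y + c)
            (g := Real.log) (Real.continuousAt_log hAc.ne') hadd
        · exact ((Real.continuous_sin.comp (continuous_const.mul continuous_id)).continuousAt).div_const θ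
      have hval : (Real.log T - Real.log (A + c)) * (Real.sin (θ*A)/θ) = 0 := by
        rw [show A + c = T by rw [hAdef]; ring, sub_self, zero_mul]
      have h2 := hcont.tendsto.mono_left (nhdsWithin_le_nhds (s := Set.Iio A))
      rwa [hval] at h2
    have := intervalIntegral.integral_eq_sub_of_hasDerivAt_of_tendsto hA hderiv (p1.sub p2) ha hb
    rw [this, sub_zero]
  have stepc : ∫ x in (0:ℝ)..A, Real.cos (θ*x) * (Real.log T - Real.log (x + c))
      = ∫ x in (0:ℝ)..A, Real.sin (θ*x) / (θ*(x + c)) := by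
    have := intervalIntegral.integral_sub p1 p2
    rw [hFTC] at this
    linarith [this.symm]
  -- substitution
  have stepe : ∫ x in (0:ℝ)..A, Real.sin (θ*x) / (θ*(x + c))
      = ∫ x in (0:ℝ)..A, Real.sin (k*x) / (k*x + k*c) := by
    apply intervalIntegral.integral_congr
    intro x _
    dsimp only
    rcases abs_cases ξ with ⟨h1, _⟩ | ⟨h1, _⟩
    · rw [show k = θ by rw [hkdef, hθdef, h1], mul_add]
    · have hkθ : k = -θ := by rw [hkdef, hθdef, h1]; ring
      rw [hkθ, show ((-θ)*x + (-θ)*c : ℝ) = -(θ*(x+c)) from by ring,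
        show ((-θ)*x : ℝ) = -(θ*x) from by ring, Real.sin_neg, neg_div_neg_eq]
  have stepf : ∫ x in (0:ℝ)..A, Real.sin (k*x) / (k*x + k*c)
      = k⁻¹ * ∫ x in (0:ℝ)..(k*A), Real.sin x / (x + k*c) := by
    have := intervalIntegral.integral_comp_mul_left (a := 0) (b := A)
      (f := fun u => Real.sin u / (u + k*c)) (c := k) hk0.ne'
    simp only [mul_zero] at this
    rw [this, smul_eq_mul]
  -- assemble
  rw [stepa, intervalIntegral.integral_const_mul, stepc, stepe, stepf,
    show k*A = 2 * π * (T - c) * |ξ| from by rw [hkdef, hAdef]; ring, ← mul_assoc,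
    show (2:ℝ) * k⁻¹ = 1/(π*|ξ|) from by rw [hkdef]; field_simp, hkdef]

lemma max_half (y : ℝ) : max y 0 = (y + |y|)/2 := by
  rcases le_total 0 y with h | h
  · rw [max_eq_left h, abs_of_nonneg h]; ring
  · rw [max_eq_right h, abs_of_nonpos h]; ring

set_option maxHeartbeats 1000000 in
theorem fourier_transform_logplus_kernel
    (T c ξ : ℝ) (hT : 0 < T) (hc : 0 ≤ c) (hcT : c < T) (hξ : ξ ≠ 0) :
    ∫ x : ℝ, Complex.exp (-2 * Real.pi * Complex.I * ξ * x) *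
        (max (Real.log (T / (|x| + c))) 0 : ℝ) =
      ((1 / (Real.pi * |ξ|)) *
        ∫ x in (0 : ℝ)..(2 * Real.pi * (T - c) * |ξ|),
          Real.sin x / (x + 2 * Real.pi * |ξ| * c) : ℝ) := by
  have hA : 0 < T - c := by linarith
  set H : ℝ → ℂ := fun x => Complex.exp (-2 * Real.pi * Complex.I * ξ * x) *
        ((max (Real.log (T / (|x| + c))) 0 : ℝ) : ℂ) with hHdef
  set f : ℝ → ℝ := fun x => max (Real.log (T / (|x| + c))) 0 with hfdef
  have hfzero : ∀ x : ℝ, x ∉ Set.Ioc (-(T-c)) (T-c) → H x = 0 := by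
    intro x hx
    have habs : T - c ≤ |x| := by
      rcases not_and_or.mp hx with h | h
      · push_neg at h
        calc T - c ≤ -x := by linarith
          _ ≤ |x| := neg_le_abs x
      · push_neg at h
        calc T - c ≤ x := h.le
          _ ≤ |x| := le_abs_self x
    have h1 : T / (|x| + c) ≤ 1 := by
      rw [div_le_one (by linarith [abs_nonneg x])]
      linarith
    have h2 : Real.log (T / (|x| + c)) ≤ 0 := Real.log_nonpos (by positivity) h1
    simp [hHdef, max_eq_right h2]
  have f_int : IntervalIntegrable f volume 0 (T-c) := by
    have g1 : IntervalIntegrable (fun x => Real.log T - Real.log (x + c)) volume 0 (T-c) :=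
      (_root_.intervalIntegrable_const).sub (logAddInt c (T-c) hc hA.le)
    have g2 : IntervalIntegrable
        (fun x => ((Real.log T - Real.log (x + c)) + |Real.log T - Real.log (x + c)|)/2)
        volume 0 (T-c) := (g1.add g1.abs).div_const 2
    rw [intervalIntegrable_iff, uIoc_of_le hA.le] at g2 ⊢
    refine g2.congr_fun ?_ measurableSet_Ioc
    intro x hx
    have hx0 : 0 < x := hx.1
    have hxc : 0 < x + c := by linarith
    simp only [hfdef]
    rw [abs_of_pos hx0, Real.log_div hT.ne' hxc.ne', max_half]
  have f_int_neg : IntervalIntegrable f volume (-(T-c)) 0 := by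
    have h := (IntervalIntegrable.iff_comp_neg (f := f)).mp f_int
    simp only [hfdef, abs_neg, neg_zero] at h
    exact h.symm
  have fC : IntervalIntegrable (fun x => ((f x : ℝ) : ℂ)) volume 0 (T-c) :=
    ⟨f_int.1.ofReal, f_int.2.ofReal⟩
  have fC_neg : IntervalIntegrable (fun x => ((f x : ℝ) : ℂ)) volume (-(T-c)) 0 :=
    ⟨f_int_neg.1.ofReal, f_int_neg.2.ofReal⟩
  have hcontExp : Continuous (fun x : ℝ => Complex.exp (-2 * Real.pi * Complex.I * ξ * x)) :=
    Complex.continuous_exp.comp (continuous_const.mul Complex.continuous_ofReal)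
  have hH1 : IntervalIntegrable H volume 0 (T-c) := fC.continuousOn_mul hcontExp.continuousOn
  have hH2 : IntervalIntegrable H volume (-(T-c)) 0 := fC_neg.continuousOn_mul hcontExp.continuousOn
  have hHneg : IntervalIntegrable (fun x => H (-x)) volume 0 (T-c) := by
    have h := (IntervalIntegrable.iff_comp_neg (f := H)).mp hH2
    simp only [neg_neg, neg_zero] at h
    exact h.symm
  have e1 : ∫ x : ℝ, H x = ∫ x in (-(T-c))..(T-c), H x := by
    rw [intervalIntegral.integral_of_le (by linarith : -(T-c) ≤ (T-c))]
    exact (setIntegral_eq_integral_of_forall_compl_eq_zero hfzero).symm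
  have e2 : ∫ x in (-(T-c))..(T-c), H x = ∫ x in (0:ℝ)..(T-c), (H (-x) + H x) := by
    rw [← intervalIntegral.integral_add_adjacent_intervals hH2 hH1,
      intervalIntegral.integral_add hHneg hH1]
    congr 1
    have h := intervalIntegral.integral_comp_neg (a := 0) (b := T-c) (fun x => H x)
    simpa using h.symm
  have e3 : ∀ x : ℝ, H (-x) + H x =
      ((2 * Real.cos (2*Real.pi*ξ*x) * f x : ℝ) : ℂ) := by
    intro x
    have hfx : f (-x) = f x := by simp [hfdef, abs_neg]
    have h1 : (-2 * (Real.pi:ℂ) * Complex.I * (ξ:ℂ) * ((-x : ℝ) : ℂ)) =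
        ((2*Real.pi*ξ*x : ℝ) : ℂ) * Complex.I := by push_cast; ring
    have h2 : (-2 * (Real.pi:ℂ) * Complex.I * (ξ:ℂ) * ((x:ℝ) : ℂ)) =
        ((-(2*Real.pi*ξ*x) : ℝ) : ℂ) * Complex.I := by push_cast; ring
    simp only [hHdef, hfdef, abs_neg]
    rw [h1, h2, Complex.exp_mul_I, Complex.exp_mul_I]
    simp only [← Complex.ofReal_cos, ← Complex.ofReal_sin]
    rw [Real.cos_neg, Real.sin_neg]
    push_cast
    ring
  have e4 : ∫ x in (0:ℝ)..(T-c), (H (-x) + H x) =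
      ((∫ x in (0:ℝ)..(T-c), 2 * Real.cos (2*Real.pi*ξ*x) * f x : ℝ) : ℂ) := by
    rw [← intervalIntegral.integral_ofReal]
    exact intervalIntegral.integral_congr (fun x _ => e3 x)
  have key := realSide T c ξ hT hc hcT hξ
  rw [e1, e2, e4]
  exact_mod_cast congrArg Complex.ofReal key
end

section
/- Fix L > 0 and let the kernel K_L(t,s) = (1/(πL)) · (1 − g_L(t)²) / ((1 − g_L(t))² − 2 g_L(t) s/L) · 1/√(1 − (1 + s/L)²) for t > 0 and s ∈ (−2L, 0), where g_L(t) = t/L + 1 − √((t/L+1)²−1). Then as L → ∞ with t > 0 and s < 0 fixed, K_L(t,s) → (1/π) √t/((t−s)√(−s)). -/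
open Real Filter

/-- The boundary conformal factor `g_L(t) = t/L + 1 - √((t/L+1)² - 1)`. -/
noncomputable def gL (L t : ℝ) : ℝ := t / L + 1 - Real.sqrt ((t / L + 1) ^ 2 - 1)

/-- The finite-window prediction kernel `K_L(t,s)`. -/
noncomputable def KL (L t s : ℝ) : ℝ :=
  (1 / (Real.pi * L)) * ((1 - gL L t ^ 2) / ((1 - gL L t) ^ 2 - 2 * gL L t * s / L)) *
    (1 / Real.sqrt (1 - (1 + s / L) ^ 2))

set_option maxHeartbeats 1000000 in
theorem KL_tendsto_infinite_window_kernel (t s : ℝ) (ht : 0 < t) (hs : s < 0) :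
    Tendsto (fun L : ℝ => KL L t s) atTop
      (nhds ((1 / Real.pi) * Real.sqrt t / ((t - s) * Real.sqrt (-s)))) := by
  have hts : (0:ℝ) < t - s := by linarith
  have hssq : 0 < Real.sqrt (-s) := Real.sqrt_pos.mpr (by linarith)
  have h2sq : 0 < Real.sqrt 2 := by positivity
  have hdiv : ∀ c : ℝ, Tendsto (fun L : ℝ => c / L) atTop (nhds 0) := by
    intro c
    simpa [div_eq_mul_inv] using tendsto_inv_atTop_zero.const_mul c
  have hg : Tendsto (fun L => gL L t) atTop (nhds 1) := by
    have hc : Continuous fun u : ℝ => u + 1 - Real.sqrt ((u + 1) ^ 2 - 1) := by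
      continuity
    have := (hc.tendsto 0).comp (hdiv t)
    simpa [gL, Function.comp_def] using this
  have h2 : Tendsto (fun L : ℝ => Real.sqrt (t / L + 2)) atTop (nhds (Real.sqrt 2)) := by
    have := (Real.continuous_sqrt.tendsto (0 + 2)).comp ((hdiv t).add tendsto_const_nhds)
    simpa [Function.comp_def] using this
  have h3 : Tendsto (fun L : ℝ => Real.sqrt (t / L)) atTop (nhds 0) := by
    have := (Real.continuous_sqrt.tendsto 0).comp (hdiv t)
    simpa [Function.comp_def] using this
  have h4 : Tendsto (fun L : ℝ => Real.sqrt (2 + s / L)) atTop (nhds (Real.sqrt 2)) := by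
    have := (Real.continuous_sqrt.tendsto (2 + 0)).comp (tendsto_const_nhds.add (hdiv s))
    simpa [Function.comp_def] using this
  -- limit of the simplified expression
  have hnum : Tendsto
      (fun L : ℝ => 1 / Real.pi * (Real.sqrt t * (Real.sqrt (t / L + 2) - Real.sqrt (t / L))
        * (1 + gL L t))) atTop
      (nhds (1 / Real.pi * (Real.sqrt t * (Real.sqrt 2 - 0) * (1 + 1)))) :=
    tendsto_const_nhds.mul (((tendsto_const_nhds.mul (h2.sub h3)).mul
      (tendsto_const_nhds.add hg)))
  have hden : Tendsto
      (fun L : ℝ => 2 * gL L t * (t - s) * Real.sqrt (-s) * Real.sqrt (2 + s / L)) atTop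
      (nhds (2 * 1 * (t - s) * Real.sqrt (-s) * Real.sqrt 2)) :=
    (((tendsto_const_nhds.mul hg).mul tendsto_const_nhds).mul tendsto_const_nhds).mul h4
  have hden_ne : 2 * 1 * (t - s) * Real.sqrt (-s) * Real.sqrt 2 ≠ 0 :=
    ne_of_gt (mul_pos (mul_pos (mul_pos (by norm_num) hts) hssq) h2sq)
  have hF : Tendsto
      (fun L : ℝ => 1 / Real.pi * (Real.sqrt t * (Real.sqrt (t / L + 2) - Real.sqrt (t / L))
          * (1 + gL L t)) /
        (2 * gL L t * (t - s) * Real.sqrt (-s) * Real.sqrt (2 + s / L))) atTop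
      (nhds (1 / Real.pi * (Real.sqrt t * (Real.sqrt 2 - 0) * (1 + 1)) /
        (2 * 1 * (t - s) * Real.sqrt (-s) * Real.sqrt 2))) :=
    hnum.div hden hden_ne
  have hval : 1 / Real.pi * (Real.sqrt t * (Real.sqrt 2 - 0) * (1 + 1)) /
      (2 * 1 * (t - s) * Real.sqrt (-s) * Real.sqrt 2)
      = 1 / Real.pi * Real.sqrt t / ((t - s) * Real.sqrt (-s)) := by
    field_simp
    ring
  rw [hval] at hF
  refine Filter.Tendsto.congr' ?_ hF
  filter_upwards [eventually_gt_atTop (max 1 (-s))] with L hL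
  have hL1 : (1:ℝ) < L := lt_of_le_of_lt (le_max_left _ _) hL
  have hLs : -s < L := lt_of_le_of_lt (le_max_right _ _) hL
  have hL0 : (0:ℝ) < L := by linarith
  have hx : 0 < t / L := div_pos ht hL0
  have hy1 : -1 < s / L := by
    rw [neg_lt, ← neg_div]
    exact (div_lt_one hL0).mpr hLs
  have h2y : 0 < 2 + s / L := by linarith
  set a := Real.sqrt (t / L) with ha_def
  set b := Real.sqrt (t / L + 2) with hb_def
  have ha2 : a ^ 2 = t / L := Real.sq_sqrt hx.le
  have hb2 : b ^ 2 = t / L + 2 := Real.sq_sqrt (by linarith)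
  have ha0 : 0 < a := Real.sqrt_pos.mpr hx
  have hb0 : 0 < b := Real.sqrt_pos.mpr (by linarith)
  have hab : a < b := Real.sqrt_lt_sqrt hx.le (by linarith)
  have hsqab : Real.sqrt ((t / L + 1) ^ 2 - 1) = a * b := by
    rw [show (t / L + 1) ^ 2 - 1 = (t / L) * (t / L + 2) by ring, Real.sqrt_mul hx.le]
  have hgL : gL L t = t / L + 1 - a * b := by rw [gL, hsqab]
  have hgpos : 0 < gL L t := by
    rw [hgL]
    nlinarith [sq_nonneg (b - a)]
  have hkey : (1 - gL L t) ^ 2 = 2 * (t / L) * gL L t := by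
    rw [hgL]
    linear_combination b ^ 2 * ha2 + (t / L) * hb2
  have hdA : (1 - gL L t) ^ 2 - 2 * gL L t * s / L = 2 * gL L t * (t - s) / L := by
    rw [hkey]
    field_simp
  have hsB : Real.sqrt (1 - (1 + s / L) ^ 2)
      = Real.sqrt (-s) * Real.sqrt (2 + s / L) / Real.sqrt L := by
    rw [show 1 - (1 + s / L) ^ 2 = (-s / L) * (2 + s / L) by ring,
      Real.sqrt_mul (div_nonneg (by linarith) hL0.le), Real.sqrt_div (by linarith : (0:ℝ) ≤ -s)]
    ring
  have h1mg : 1 - gL L t = a * (b - a) := by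
    rw [hgL]
    linear_combination ha2
  have haL : a * Real.sqrt L = Real.sqrt t := by
    rw [ha_def, ← Real.sqrt_mul hx.le, div_mul_cancel₀ _ hL0.ne']
  have hsL : Real.sqrt L ≠ 0 := (Real.sqrt_pos.mpr hL0).ne'
  have h2s : Real.sqrt (2 + s / L) ≠ 0 := (Real.sqrt_pos.mpr h2y).ne'
  rw [KL, hdA, hsB, show (1:ℝ) - gL L t ^ 2 = (1 - gL L t) * (1 + gL L t) by ring, h1mg,
    ← haL]
  set g := gL L t with hg_def
  set c := Real.sqrt (2 + s / L) with hc_def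
  set d := Real.sqrt (-s) with hd_def
  set e := Real.sqrt L with he_def
  have he2 : e ^ 2 = L := Real.sq_sqrt hL0.le
  have he0 : e ≠ 0 := hsL
  have hd0 : d ≠ 0 := hssq.ne'
  rw [← he2]
  field_simp
end
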